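/- For the Cramér model with S_n = Σ_{j=3}^n ξ_j, P{ξ_j=1} = 1/log j, m_n = E[S_n], B_n = Var(S_n): for every b > b' > 1/2, there exists N such that for all n ≥ N, P{|S_n − m_n| ≥ √(2 b B_n log n)} ≤ 2 n^{−b'}. -/

import Mathlib

open MeasureTheory ProbabilityTheory Real Filter

noncomputable def crP (j : ℕ) : ℝ := 1 / Real.log j
noncomputable def crM (n : ℕ) : ℝ := ∑ j ∈ Finset.Icc 3 n, crP j
noncomputable def crB (n : ℕ) : ℝ := ∑ j ∈ Finset.Icc 3 n, crP j * (1 - crP j)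

lemma log3_gt : 1 < Real.log 3 := by
  rw [Real.lt_log_iff_exp_lt (by norm_num)]
  calc Real.exp 1 < 2.7182818286 := Real.exp_one_lt_d9
    _ < 3 := by norm_num

lemma log_ge (j : ℕ) (hj : 3 ≤ j) : 1 < Real.log j :=
  lt_of_lt_of_le log3_gt (Real.log_le_log (by norm_num) (by exact_mod_cast hj))

lemma crP_pos (j : ℕ) (hj : 3 ≤ j) : 0 < crP j :=
  div_pos one_pos (lt_trans one_pos (log_ge j hj))

lemma crP_lt_one (j : ℕ) (hj : 3 ≤ j) : crP j < 1 := by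
  rw [crP, div_lt_one (lt_trans one_pos (log_ge j hj))]; exact log_ge j hj

lemma crM_pos (n : ℕ) (hn : 3 ≤ n) : 0 < crM n := by
  apply Finset.sum_pos (fun j hj => crP_pos j (Finset.mem_Icc.mp hj).1)
  exact ⟨3, Finset.mem_Icc.mpr ⟨le_refl 3, hn⟩⟩

lemma crM_lower (n : ℕ) (hn : 3 ≤ n) : ((n : ℝ) - 2) / Real.log n ≤ crM n := by
  have hlogn : 0 < Real.log n := lt_trans one_pos (log_ge n hn)
  have : ∀ j ∈ Finset.Icc 3 n, 1 / Real.log n ≤ crP j := by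
    intro j hj
    obtain ⟨h1, h2⟩ := Finset.mem_Icc.mp hj
    exact one_div_le_one_div_of_le (lt_trans one_pos (log_ge j h1))
      (Real.log_le_log (by positivity) (by exact_mod_cast h2))
  calc ((n : ℝ) - 2) / Real.log n = (Finset.Icc 3 n).card * (1 / Real.log n) := by
        rw [Nat.card_Icc]
        have h3 : ((n + 1 - 3 : ℕ) : ℝ) = (n : ℝ) - 2 := by
          rw [Nat.cast_sub (by omega : 3 ≤ n + 1)]; push_cast; ring
        rw [h3]; ring
    _ = ∑ _j ∈ Finset.Icc 3 n, (1 / Real.log n) := by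
        rw [Finset.sum_const, nsmul_eq_mul]
    _ ≤ ∑ j ∈ Finset.Icc 3 n, crP j := Finset.sum_le_sum this
    _ = crM n := rfl

lemma tendsto_logsq : Tendsto (fun n : ℕ => Real.log n ^ 2 / ((n : ℝ) - 2)) atTop (nhds 0) := by
  have h := (Real.tendsto_pow_log_div_mul_add_atTop 1 (-2) 2 one_ne_zero).comp
    (tendsto_natCast_atTop_atTop (R := ℝ))
  apply h.congr
  intro n
  simp only [Function.comp_apply]
  ring_nf

lemma tendsto_log_div_crM : Tendsto (fun n : ℕ => Real.log n / crM n) atTop (nhds 0) := by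
  apply squeeze_zero' (f := fun n : ℕ => Real.log n / crM n)
    (g := fun n : ℕ => Real.log n ^ 2 / ((n : ℝ) - 2))
  · filter_upwards [eventually_ge_atTop 3] with n hn
    have := crM_pos n hn
    have : (0:ℝ) < Real.log n := lt_trans one_pos (log_ge n hn)
    positivity
  · filter_upwards [eventually_ge_atTop 3] with n hn
    have hM := crM_pos n hn
    have hMl := crM_lower n hn
    have hlogn : (0:ℝ) < Real.log n := lt_trans one_pos (log_ge n hn)
    have hn2 : (0:ℝ) < (n:ℝ) - 2 := by
      have : (3:ℝ) ≤ (n:ℝ) := by exact_mod_cast hn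
      linarith
    rw [div_le_div_iff₀ hM hn2, pow_two]
    rw [mul_comm (Real.log ↑n) ((n:ℝ)-2)]
    have := mul_le_mul_of_nonneg_left hMl (le_of_lt hlogn)
    calc ((n:ℝ) - 2) * Real.log ↑n = (Real.log ↑n * (((n:ℝ)-2)/Real.log ↑n)) * Real.log ↑n := by
          field_simp
      _ ≤ Real.log ↑n * crM n * Real.log ↑n := by
          apply mul_le_mul_of_nonneg_right _ (le_of_lt hlogn)
          exact mul_le_mul_of_nonneg_left hMl (le_of_lt hlogn)
      _ = Real.log ↑n * Real.log ↑n * crM n := by ring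
  · exact tendsto_logsq

lemma tendsto_crM_atTop : Tendsto crM atTop atTop := by
  have h0 : Tendsto (fun n : ℕ => Real.log n / ((n : ℝ) - 2)) atTop (nhds 0) := by
    have h := (Real.tendsto_pow_log_div_mul_add_atTop 1 (-2) 1 one_ne_zero).comp
      (tendsto_natCast_atTop_atTop (R := ℝ))
    apply h.congr
    intro n
    simp only [Function.comp_apply]
    ring_nf
  have hpos : ∀ᶠ n : ℕ in atTop, (0:ℝ) < Real.log n / ((n : ℝ) - 2) := by
    filter_upwards [eventually_ge_atTop 3] with n hn
    have hlogn : (0:ℝ) < Real.log n := lt_trans one_pos (log_ge n hn)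
    have hn2 : (0:ℝ) < (n:ℝ) - 2 := by
      have : (3:ℝ) ≤ (n:ℝ) := by exact_mod_cast hn
      linarith
    positivity
  have h1 : Tendsto (fun n : ℕ => Real.log n / ((n : ℝ) - 2)) atTop (nhdsWithin 0 (Set.Ioi 0)) :=
    tendsto_nhdsWithin_of_tendsto_nhds_of_eventually_within _ h0 hpos
  have h2 : Tendsto (fun n : ℕ => (Real.log n / ((n : ℝ) - 2))⁻¹) atTop atTop :=
    h1.inv_tendsto_nhdsGT_zero
  apply tendsto_atTop_mono' atTop _ h2
  filter_upwards [eventually_ge_atTop 3] with n hn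
  rw [inv_div]
  exact crM_lower n hn

lemma crB_sub : ∀ n, crB n = crM n - ∑ j ∈ Finset.Icc 3 n, crP j ^ 2 := by
  intro n
  rw [crB, crM, ← Finset.sum_sub_distrib]
  congr 1; funext j; ring

lemma crB_le_crM (n : ℕ) : crB n ≤ crM n := by
  rw [crB_sub]
  have : 0 ≤ ∑ j ∈ Finset.Icc 3 n, crP j ^ 2 := Finset.sum_nonneg (fun j _ => sq_nonneg _)
  linarith

lemma crB_nonneg (n : ℕ) : 0 ≤ crB n := by
  apply Finset.sum_nonneg
  intro j hj
  obtain ⟨h1, _⟩ := Finset.mem_Icc.mp hj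
  have := crP_pos j h1
  have := crP_lt_one j h1
  nlinarith

lemma crB_eventually (ε : ℝ) (hε : 0 < ε) : ∀ᶠ n : ℕ in atTop, (1 - ε) * crM n ≤ crB n := by
  set K : ℕ := ⌈Real.exp (2 / ε)⌉₊ + 3 with hK
  have hKlog : 2 / ε ≤ Real.log K := by
    have h1 : Real.exp (2 / ε) ≤ (K : ℝ) := by
      calc Real.exp (2/ε) ≤ (⌈Real.exp (2 / ε)⌉₊ : ℝ) := Nat.le_ceil _
        _ ≤ (K : ℝ) := by rw [hK]; push_cast; linarith
    calc 2 / ε = Real.log (Real.exp (2/ε)) := (Real.log_exp _).symm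
      _ ≤ Real.log K := Real.log_le_log (Real.exp_pos _) h1
  have hsum : ∀ n : ℕ, ∑ j ∈ Finset.Icc 3 n, crP j ^ 2 ≤ (K : ℝ) + (ε/2) * crM n := by
    intro n
    have hterm : ∀ j ∈ Finset.Icc 3 n, crP j ^ 2 ≤ (if j < K then (1:ℝ) else 0) + (ε/2) * crP j := by
      intro j hj
      obtain ⟨h1, _⟩ := Finset.mem_Icc.mp hj
      have hp0 := crP_pos j h1
      have hp1 := crP_lt_one j h1
      by_cases hjK : j < K
      · rw [if_pos hjK]; nlinarith
      · rw [if_neg hjK]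
        push_neg at hjK
        have hlogj : Real.log K ≤ Real.log j :=
          Real.log_le_log (by positivity) (by exact_mod_cast hjK)
        have h2ε : (0:ℝ) < 2/ε := by positivity
        have hlogK : (0:ℝ) < Real.log K := lt_of_lt_of_le h2ε hKlog
        have hpj : crP j ≤ ε / 2 := by
          rw [crP]
          rw [div_le_div_iff₀ (lt_of_lt_of_le hlogK hlogj) (by positivity)]
          calc (1:ℝ) * 2 = 2 := by ring
            _ = ε * (2/ε) := by field_simp
            _ ≤ ε * Real.log j := by
                apply mul_le_mul_of_nonneg_left _ hε.le
                exact le_trans hKlog hlogj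
        have : crP j * crP j ≤ (ε/2) * crP j := by nlinarith
        rw [zero_add, pow_two]
        exact this
        
    calc ∑ j ∈ Finset.Icc 3 n, crP j ^ 2
        ≤ ∑ j ∈ Finset.Icc 3 n, ((if j < K then (1:ℝ) else 0) + (ε/2) * crP j) :=
          Finset.sum_le_sum hterm
      _ = (∑ j ∈ Finset.Icc 3 n, (if j < K then (1:ℝ) else 0)) + (ε/2) * crM n := by
          rw [Finset.sum_add_distrib, crM, Finset.mul_sum]
      _ ≤ (K : ℝ) + (ε/2) * crM n := by
          apply add_le_add ?_ le_rfl
          rw [Finset.sum_boole]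
          have : (Finset.Icc 3 n).filter (fun j => j < K) ⊆ Finset.range K := by
            intro j hj
            simp only [Finset.mem_filter] at hj
            exact Finset.mem_range.mpr hj.2
          calc ((((Finset.Icc 3 n).filter (fun j => j < K)).card : ℕ) : ℝ)
              ≤ ((Finset.range K).card : ℝ) := by exact_mod_cast Finset.card_le_card this
            _ = (K : ℝ) := by rw [Finset.card_range]
  filter_upwards [tendsto_crM_atTop.eventually_ge_atTop ((2 * K) / ε)] with n hn
  rw [crB_sub]
  have h1 : (K:ℝ) ≤ (ε/2) * crM n := by
    rw [div_le_iff₀ hε] at hn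
    linarith
  have := hsum n
  nlinarith

section Prob
variable {Ω : Type*} [MeasurableSpace Ω] (μ : Measure Ω) [IsProbabilityMeasure μ]
  (ξ : ℕ → Ω → ℝ)

lemma xi_integrable (hmeas : ∀ j, Measurable (ξ j))
    (hval : ∀ j, 3 ≤ j → ∀ ω, ξ j ω = 0 ∨ ξ j ω = 1) (j : ℕ) (hj : 3 ≤ j) :
    Integrable (ξ j) μ := by
  apply (integrable_const (1:ℝ)).mono' (hmeas j).aestronglyMeasurable
  apply ae_of_all
  intro ω
  rcases hval j hj ω with h | h <;> simp [h]

lemma xi_integral (hmeas : ∀ j, Measurable (ξ j))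
    (hval : ∀ j, 3 ≤ j → ∀ ω, ξ j ω = 0 ∨ ξ j ω = 1)
    (hdist : ∀ j, 3 ≤ j → μ {ω | ξ j ω = 1} = ENNReal.ofReal (1 / Real.log j))
    (j : ℕ) (hj : 3 ≤ j) : ∫ ω, ξ j ω ∂μ = crP j := by
  have hs : MeasurableSet {ω | ξ j ω = 1} := by
    have : {ω | ξ j ω = 1} = ξ j ⁻¹' {1} := rfl
    rw [this]
    exact hmeas j (measurableSet_singleton 1)
  have hind : ∀ ω, ξ j ω = Set.indicator {ω | ξ j ω = 1} (fun _ => (1:ℝ)) ω := by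
    intro ω
    rcases hval j hj ω with h | h
    · rw [h, Set.indicator_apply, if_neg (by simp [Set.mem_setOf_eq, h])]
    · rw [h, Set.indicator_apply, if_pos (by simp [Set.mem_setOf_eq, h])]
  calc ∫ ω, ξ j ω ∂μ = ∫ ω, Set.indicator {ω | ξ j ω = 1} (fun _ => (1:ℝ)) ω ∂μ := by
        exact integral_congr_ae (ae_of_all _ hind)
    _ = (μ {ω | ξ j ω = 1}).toReal := by
        rw [integral_indicator_const (1:ℝ) hs]; simp; rfl
    _ = crP j := by
        rw [hdist j hj]
        exact ENNReal.toReal_ofReal (le_of_lt (crP_pos j hj))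

lemma xi_mgf (hmeas : ∀ j, Measurable (ξ j))
    (hval : ∀ j, 3 ≤ j → ∀ ω, ξ j ω = 0 ∨ ξ j ω = 1)
    (hdist : ∀ j, 3 ≤ j → μ {ω | ξ j ω = 1} = ENNReal.ofReal (1 / Real.log j))
    (j : ℕ) (hj : 3 ≤ j) (u : ℝ) :
    mgf (ξ j) μ u = 1 + crP j * (Real.exp u - 1) := by
  have hpt : ∀ ω, Real.exp (u * ξ j ω) = 1 + (Real.exp u - 1) * ξ j ω := by
    intro ω
    rcases hval j hj ω with h | h <;> simp [h]
  calc mgf (ξ j) μ u = ∫ ω, Real.exp (u * ξ j ω) ∂μ := rfl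
    _ = ∫ ω, (1 + (Real.exp u - 1) * ξ j ω) ∂μ := integral_congr_ae (ae_of_all _ hpt)
    _ = ∫ _ω, (1:ℝ) ∂μ + ∫ ω, (Real.exp u - 1) * ξ j ω ∂μ := by
        apply integral_add (integrable_const 1)
        exact (xi_integrable μ ξ hmeas hval j hj).const_mul _
    _ = 1 + crP j * (Real.exp u - 1) := by
        rw [MeasureTheory.integral_const_mul, integral_const, xi_integral μ ξ hmeas hval hdist j hj]
        simp [mul_comm]

end Prob

lemma exp_taylor_ub {t : ℝ} (ht : |t| ≤ 1) :
    Real.exp t ≤ 1 + t + t ^ 2 / 2 + |t| ^ 3 := by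
  have h := Real.exp_bound ht (n := 3) (by norm_num)
  have hsum : ∑ m ∈ Finset.range 3, t ^ m / (m.factorial : ℝ) = 1 + t + t ^ 2 / 2 := by
    simp [Finset.sum_range_succ]
  rw [hsum] at h
  have h2 := (abs_sub_le_iff.mp h).1
  have h3 : |t| ^ 3 * ((3+1 : ℕ) / ((3:ℕ).factorial * (3:ℕ)) : ℝ) ≤ |t| ^ 3 := by
    have : ((3+1 : ℕ) / ((3:ℕ).factorial * (3:ℕ)) : ℝ) ≤ 1 := by norm_num [Nat.factorial]
    nlinarith [pow_nonneg (abs_nonneg t) 3]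
  have : ((3:ℕ).succ : ℝ) / ((3:ℕ).factorial * (3:ℕ)) = ((3+1 : ℕ) / ((3:ℕ).factorial * (3:ℕ)) : ℝ) := by
    norm_num
  rw [this] at h2
  linarith

section Prob2
variable {Ω : Type*} [MeasurableSpace Ω] (μ : Measure Ω) [IsProbabilityMeasure μ]
  (ξ : ℕ → Ω → ℝ)

lemma S_exp_integrable (hmeas : ∀ j, Measurable (ξ j))
    (hval : ∀ j, 3 ≤ j → ∀ ω, ξ j ω = 0 ∨ ξ j ω = 1) (n : ℕ) (u : ℝ) :
    Integrable (fun ω => Real.exp (u * ∑ j ∈ Finset.Icc 3 n, ξ j ω)) μ := by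
  apply (integrable_const (Real.exp (|u| * n))).mono'
  · apply Measurable.aestronglyMeasurable
    apply Real.measurable_exp.comp
    exact (Finset.measurable_sum _ (fun j _ => hmeas j)).const_mul u
  · apply ae_of_all
    intro ω
    rw [Real.norm_eq_abs, abs_of_pos (Real.exp_pos _), Real.exp_le_exp]
    have hS0 : 0 ≤ ∑ j ∈ Finset.Icc 3 n, ξ j ω := by
      apply Finset.sum_nonneg
      intro j hj
      rcases hval j (Finset.mem_Icc.mp hj).1 ω with h | h <;> simp [h]
    have hSn : ∑ j ∈ Finset.Icc 3 n, ξ j ω ≤ n := by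
      calc ∑ j ∈ Finset.Icc 3 n, ξ j ω ≤ ∑ _j ∈ Finset.Icc 3 n, (1:ℝ) := by
            apply Finset.sum_le_sum
            intro j hj
            rcases hval j (Finset.mem_Icc.mp hj).1 ω with h | h <;> simp [h]
        _ = ((Finset.Icc 3 n).card : ℝ) := by simp
        _ ≤ n := by
            have := Nat.card_Icc 3 n
            rw [this]
            exact_mod_cast (by omega : n + 1 - 3 ≤ n)
    calc u * ∑ j ∈ Finset.Icc 3 n, ξ j ω ≤ |u| * ∑ j ∈ Finset.Icc 3 n, ξ j ω := by
          exact mul_le_mul_of_nonneg_right (le_abs_self u) hS0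
      _ ≤ |u| * n := mul_le_mul_of_nonneg_left hSn (abs_nonneg u)

lemma S_mgf_le (hmeas : ∀ j, Measurable (ξ j))
    (hindep : iIndepFun ξ μ)
    (hval : ∀ j, 3 ≤ j → ∀ ω, ξ j ω = 0 ∨ ξ j ω = 1)
    (hdist : ∀ j, 3 ≤ j → μ {ω | ξ j ω = 1} = ENNReal.ofReal (1 / Real.log j))
    (n : ℕ) (u : ℝ) :
    mgf (fun ω => ∑ j ∈ Finset.Icc 3 n, ξ j ω) μ u ≤ Real.exp (crM n * (Real.exp u - 1)) := by
  have hfun : (fun ω => ∑ j ∈ Finset.Icc 3 n, ξ j ω) = ∑ j ∈ Finset.Icc 3 n, ξ j := by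
    funext ω
    rw [Finset.sum_apply]
  rw [hfun, hindep.mgf_sum hmeas (Finset.Icc 3 n)]
  calc ∏ j ∈ Finset.Icc 3 n, mgf (ξ j) μ u
      ≤ ∏ j ∈ Finset.Icc 3 n, Real.exp (crP j * (Real.exp u - 1)) := by
        apply Finset.prod_le_prod (fun j _ => mgf_nonneg)
        intro j hj
        rw [xi_mgf μ ξ hmeas hval hdist j (Finset.mem_Icc.mp hj).1 u]
        have := Real.add_one_le_exp (crP j * (Real.exp u - 1))
        linarith
    _ = Real.exp (∑ j ∈ Finset.Icc 3 n, crP j * (Real.exp u - 1)) := (Real.exp_sum _ _).symm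
    _ = Real.exp (crM n * (Real.exp u - 1)) := by
        rw [← Finset.sum_mul, crM]

end Prob2

/-- Cramér model deviation bound: for every `b > b' > 1/2` there is `N` such that for all
`n ≥ N`, `P{|S_n − m_n| ≥ √(2 b B_n log n)} ≤ 2 n^{−b'}`. -/
theorem stmt_8 {Ω : Type*} [MeasurableSpace Ω] (μ : Measure Ω) [IsProbabilityMeasure μ]
    (ξ : ℕ → Ω → ℝ) (hmeas : ∀ j, Measurable (ξ j))
    (hindep : iIndepFun ξ μ)
    (hval : ∀ j, 3 ≤ j → ∀ ω, ξ j ω = 0 ∨ ξ j ω = 1)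
    (hdist : ∀ j, 3 ≤ j → μ {ω | ξ j ω = 1} = ENNReal.ofReal (1 / Real.log j)) :
    ∀ b b' : ℝ, 1 / 2 < b' → b' < b →
      ∃ N : ℕ, ∀ n : ℕ, N ≤ n →
        μ {ω | Real.sqrt (2 * b * (∑ j ∈ Finset.Icc 3 n, (1 / Real.log j) * (1 - 1 / Real.log j))
              * Real.log n)
            ≤ |(∑ j ∈ Finset.Icc 3 n, ξ j ω) - ∑ j ∈ Finset.Icc 3 n, 1 / Real.log j|}
          ≤ ENNReal.ofReal (2 * (n : ℝ) ^ (-b')) := by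
  intro b b' hb' hbb
  have hb'0 : 0 < b' := lt_trans (by norm_num) hb'
  have hb : 0 < b := lt_trans hb'0 hbb
  set δ : ℝ := (b - b') / (3 * b) with hδdef
  have hδ : 0 < δ := div_pos (by linarith) (by linarith)
  have hδhalf : δ < 1/2 := by
    rw [hδdef, div_lt_iff₀ (by linarith : (0:ℝ) < 3 * b)]
    linarith
  have hδb : b * (1 - 3 * δ) = b' := by
    rw [hδdef]; field_simp; ring
  -- eventual conditions
  have hc : (0:ℝ) < (min δ 1)^2 / (2 * b) := by
    have : (0:ℝ) < min δ 1 := lt_min hδ one_pos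
    positivity
  have E3 : ∀ᶠ n : ℕ in atTop, Real.log n / crM n < (min δ 1)^2 / (2 * b) :=
    tendsto_log_div_crM.eventually_lt_const hc
  obtain ⟨N, hN⟩ := eventually_atTop.mp
    (((eventually_ge_atTop 3).and ((crB_eventually δ hδ).and E3)))
  refine ⟨N, fun n hn => ?_⟩
  obtain ⟨hn3, hE2, hE3⟩ := hN n hn
  -- notation
  set S : Ω → ℝ := fun ω => ∑ j ∈ Finset.Icc 3 n, ξ j ω with hSdef
  have hMdef : (∑ j ∈ Finset.Icc 3 n, 1 / Real.log j) = crM n := by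
    simp only [crM, crP]
  have hBdef : (∑ j ∈ Finset.Icc 3 n, (1 / Real.log j) * (1 - 1 / Real.log j)) = crB n := by
    simp only [crB, crP]
  rw [hMdef, hBdef]
  set M : ℝ := crM n with hMd
  set B : ℝ := crB n with hBd
  set x : ℝ := Real.sqrt (2 * b * B * Real.log n) with hxdef
  have hM : 0 < M := crM_pos n hn3
  have hlogn1 : 1 < Real.log n := log_ge n hn3
  have hlogn : 0 < Real.log n := lt_trans one_pos hlogn1
  have hB0 : 0 ≤ B := crB_nonneg n
  have hBM : B ≤ M := crB_le_crM n
  have hx0 : 0 ≤ x := Real.sqrt_nonneg _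
  have hx2 : x ^ 2 = 2 * b * B * Real.log n := Real.sq_sqrt (by positivity)
  set t : ℝ := x / M with htdef
  have ht0 : 0 ≤ t := div_nonneg hx0 hM.le
  have htle : t ≤ min δ 1 := by
    have hmin : 0 < min δ 1 := lt_min hδ one_pos
    have ht2 : t ^ 2 ≤ (min δ 1) ^ 2 := by
      have h1 : t ^ 2 = x ^ 2 / M ^ 2 := by rw [htdef]; ring
      have h2 : x ^ 2 / M ^ 2 ≤ 2 * b * Real.log n / M := by
        rw [hx2, div_le_div_iff₀ (by positivity) hM]
        have hkey : B * (2 * b * Real.log n * M) ≤ M * (2 * b * Real.log n * M) :=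
          mul_le_mul_of_nonneg_right hBM (by positivity)
        nlinarith [hkey]
      have h3 : 2 * b * Real.log n / M ≤ (min δ 1) ^ 2 := by
        rw [div_le_iff₀ hM]
        rw [div_lt_iff₀ hM] at hE3
        have h4 := mul_le_mul_of_nonneg_left hE3.le (by positivity : (0:ℝ) ≤ 2 * b)
        have heq : 2 * b * ((min δ 1) ^ 2 / (2 * b) * M) = (min δ 1) ^ 2 * M := by
          field_simp
        rw [heq] at h4
        linarith
      calc t ^ 2 = x ^ 2 / M ^ 2 := h1
        _ ≤ 2 * b * Real.log n / M := h2
        _ ≤ (min δ 1) ^ 2 := h3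
    nlinarith
  have ht1 : t ≤ 1 := le_trans htle (min_le_right _ _)
  have htδ : t ≤ δ := le_trans htle (min_le_left _ _)
  have htM : t * M = x := div_mul_cancel₀ x hM.ne'
  -- key exponent bound
  have key : -(t * x) + M * (t ^ 2 / 2 + t ^ 3) ≤ -b' * Real.log n := by
    have hg : x * t = x ^ 2 / M := by rw [htdef]; ring
    have hxt_lo : 2 * b * (1 - δ) * Real.log n ≤ x * t := by
      rw [hg, le_div_iff₀ hM, hx2]
      have h := mul_le_mul_of_nonneg_left hE2 (by positivity : (0:ℝ) ≤ 2 * b * Real.log n)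
      linarith [h]
    have hgt : (x * t) * t ≤ (x * t) * δ :=
      mul_le_mul_of_nonneg_left htδ (mul_nonneg hx0 ht0)
    have hexpand : -(t * x) + M * (t ^ 2 / 2 + t ^ 3) = -(x * t) / 2 + (x * t) * t := by
      have h1 : M * t ^ 2 = x * t := by rw [← htM]; ring
      have h2 : M * t ^ 3 = (x * t) * t := by rw [← htM]; ring
      calc -(t * x) + M * (t ^ 2 / 2 + t ^ 3) = -(x * t) + (M * t ^ 2) / 2 + M * t ^ 3 := by ring
        _ = -(x * t) + (x * t) / 2 + (x * t) * t := by rw [h1, h2]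
        _ = -(x * t) / 2 + (x * t) * t := by ring
    rw [hexpand]
    have hprod := mul_le_mul_of_nonneg_right hxt_lo (by linarith : (0:ℝ) ≤ 1/2 - δ)
    have hstep : (2 * b * (1 - δ) * Real.log n) * (1/2 - δ) - b' * Real.log n
        = 2 * b * δ ^ 2 * Real.log n := by rw [← hδb]; ring
    have hnn : (0:ℝ) ≤ 2 * b * δ ^ 2 * Real.log n := by positivity
    linarith [hgt, hprod, hstep, hnn]
  -- Chernoff bounds
  have hmgf1 := S_mgf_le μ ξ hmeas hindep hval hdist n t
  have hmgf2 := S_mgf_le μ ξ hmeas hindep hval hdist n (-t)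
  have htexp : Real.exp t - 1 - t ≤ t ^ 2 / 2 + t ^ 3 := by
    have h := exp_taylor_ub (t := t) (by rw [abs_of_nonneg ht0]; exact ht1)
    rw [abs_of_nonneg ht0] at h
    linarith
  have htexp2 : Real.exp (-t) - 1 + t ≤ t ^ 2 / 2 + t ^ 3 := by
    have h := exp_taylor_ub (t := -t) (by rw [abs_neg, abs_of_nonneg ht0]; exact ht1)
    rw [abs_neg, abs_of_nonneg ht0] at h
    have hsq : (-t) ^ 2 = t ^ 2 := by ring
    rw [hsq] at h
    linarith
  have tail1 : (μ {ω | M + x ≤ S ω}).toReal ≤ Real.exp (-b' * Real.log n) := by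
    have h := measure_ge_le_exp_mul_mgf (μ := μ) (X := S) (M + x) ht0
      (S_exp_integrable μ ξ hmeas hval n t)
    apply le_trans h
    calc Real.exp (-t * (M + x)) * mgf S μ t
        ≤ Real.exp (-t * (M + x)) * Real.exp (M * (Real.exp t - 1)) := by
          exact mul_le_mul_of_nonneg_left hmgf1 (Real.exp_pos _).le
      _ = Real.exp (-t * (M + x) + M * (Real.exp t - 1)) := (Real.exp_add _ _).symm
      _ ≤ Real.exp (-b' * Real.log n) := by
          rw [Real.exp_le_exp]
          have h1 : -t * (M + x) + M * (Real.exp t - 1)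
              = -(t * x) + M * (Real.exp t - 1 - t) := by ring
          rw [h1]
          have h2 : M * (Real.exp t - 1 - t) ≤ M * (t ^ 2 / 2 + t ^ 3) :=
            mul_le_mul_of_nonneg_left htexp hM.le
          linarith
  have tail2 : (μ {ω | S ω ≤ M - x}).toReal ≤ Real.exp (-b' * Real.log n) := by
    have h := measure_le_le_exp_mul_mgf (μ := μ) (X := S) (M - x) (t := -t)
      (neg_nonpos.mpr ht0) (S_exp_integrable μ ξ hmeas hval n (-t))
    apply le_trans h
    calc Real.exp (-(-t) * (M - x)) * mgf S μ (-t)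
        ≤ Real.exp (-(-t) * (M - x)) * Real.exp (M * (Real.exp (-t) - 1)) := by
          exact mul_le_mul_of_nonneg_left hmgf2 (Real.exp_pos _).le
      _ = Real.exp (-(-t) * (M - x) + M * (Real.exp (-t) - 1)) := (Real.exp_add _ _).symm
      _ ≤ Real.exp (-b' * Real.log n) := by
          rw [Real.exp_le_exp]
          have h1 : -(-t) * (M - x) + M * (Real.exp (-t) - 1)
              = -(t * x) + M * (Real.exp (-t) - 1 + t) := by ring
          rw [h1]
          have h2 : M * (Real.exp (-t) - 1 + t) ≤ M * (t ^ 2 / 2 + t ^ 3) :=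
            mul_le_mul_of_nonneg_left htexp2 hM.le
          linarith
  -- rpow
  have hrpow : Real.exp (-b' * Real.log n) = (n : ℝ) ^ (-b') := by
    rw [Real.rpow_def_of_pos (by positivity : (0:ℝ) < (n:ℝ))]
    ring_nf
  have hrnonneg : (0:ℝ) ≤ (n:ℝ) ^ (-b') := Real.rpow_nonneg (by positivity) _
  -- assemble
  have hsub : {ω | x ≤ |S ω - M|} ⊆ {ω | M + x ≤ S ω} ∪ {ω | S ω ≤ M - x} := by
    intro ω hω
    simp only [Set.mem_setOf_eq] at hω
    rcases le_abs.mp hω with h | h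
    · left; simp only [Set.mem_setOf_eq]; linarith
    · right; simp only [Set.mem_setOf_eq]; linarith
  have hA : μ {ω | M + x ≤ S ω} ≤ ENNReal.ofReal ((n:ℝ) ^ (-b')) := by
    rw [← ENNReal.ofReal_toReal (measure_ne_top μ _)]
    exact ENNReal.ofReal_le_ofReal (hrpow ▸ tail1)
  have hC : μ {ω | S ω ≤ M - x} ≤ ENNReal.ofReal ((n:ℝ) ^ (-b')) := by
    rw [← ENNReal.ofReal_toReal (measure_ne_top μ _)]
    exact ENNReal.ofReal_le_ofReal (hrpow ▸ tail2)
  calc μ {ω | x ≤ |S ω - M|} ≤ μ ({ω | M + x ≤ S ω} ∪ {ω | S ω ≤ M - x}) := measure_mono hsub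
    _ ≤ μ {ω | M + x ≤ S ω} + μ {ω | S ω ≤ M - x} := measure_union_le _ _
    _ ≤ ENNReal.ofReal ((n:ℝ) ^ (-b')) + ENNReal.ofReal ((n:ℝ) ^ (-b')) := add_le_add hA hC
    _ = ENNReal.ofReal (2 * (n:ℝ) ^ (-b')) := by
        rw [← ENNReal.ofReal_add hrnonneg hrnonneg]
        congr 1
        ring
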